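/- There do not exist continuously differentiable functions b₁, b₂ : ℝ⁴ → ℝ, 1-periodic in each of the four variables (y¹, y², q¹, q²), such that ∂b₂/∂q¹ − ∂b₁/∂q² = 2π² cos(2πy¹)·cos(2πy²) at every point of ℝ⁴. -/

import Mathlib

open MeasureTheory intervalIntegral Real

/-- Obstruction in Zambon's example: there are no `C¹` functions `b₁, b₂` on
`ℝ⁴ ∋ (y¹,y²,q¹,q²)` (coordinates `x 0, x 1, x 2, x 3`), `1`-periodic in each
variable, with `∂b₂/∂q¹ − ∂b₁/∂q² = 2π² cos(2πy¹)·cos(2πy²)` everywhere. -/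
theorem zambon_obstruction :
    ¬ ∃ b₁ b₂ : (Fin 4 → ℝ) → ℝ,
        ContDiff ℝ 1 b₁ ∧ ContDiff ℝ 1 b₂ ∧
        (∀ (x : Fin 4 → ℝ) (i : Fin 4), b₁ (x + Pi.single i 1) = b₁ x) ∧
        (∀ (x : Fin 4 → ℝ) (i : Fin 4), b₂ (x + Pi.single i 1) = b₂ x) ∧
        (∀ x : Fin 4 → ℝ,
          fderiv ℝ b₂ x (Pi.single 2 1) - fderiv ℝ b₁ x (Pi.single 3 1) =
            2 * Real.pi ^ 2 * Real.cos (2 * Real.pi * x 0) * Real.cos (2 * Real.pi * x 1)) := by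
  rintro ⟨b₁, b₂, hb₁, hb₂, hp₁, hp₂, heq⟩
  set e₂ : Fin 4 → ℝ := Pi.single 2 1 with he₂
  set e₃ : Fin 4 → ℝ := Pi.single 3 1 with he₃
  set p : ℝ → ℝ → (Fin 4 → ℝ) := fun s t => s • e₂ + t • e₃ with hpdef
  set c : ℝ := 2 * Real.pi ^ 2 with hc
  have hp0 : ∀ s t, p s t 0 = 0 := by intro s t; simp [hpdef, he₂, he₃]
  have hp1 : ∀ s t, p s t 1 = 0 := by intro s t; simp [hpdef, he₂, he₃]
  have heq' : ∀ s t, fderiv ℝ b₂ (p s t) e₂ - fderiv ℝ b₁ (p s t) e₃ = c := by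
    intro s t
    have := heq (p s t)
    rw [hp0, hp1] at this
    simpa [hc] using this
  have hcurve₃ : ∀ s t : ℝ, HasDerivAt (fun t => p s t) e₃ t := by
    intro s t
    simpa [hpdef] using ((hasDerivAt_id t).smul_const e₃).const_add (s • e₂)
  have hcurve₂ : ∀ t s : ℝ, HasDerivAt (fun s => p s t) e₂ s := by
    intro t s
    simpa [hpdef] using ((hasDerivAt_id s).smul_const e₂).add_const (t • e₃)
  set g : ℝ → ℝ → ℝ := fun s t => fderiv ℝ b₂ (p s t) e₂ with hg
  have hpc : Continuous fun q : ℝ × ℝ => p q.1 q.2 :=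
    (continuous_fst.smul continuous_const).add (continuous_snd.smul continuous_const)
  have hgc : Continuous fun q : ℝ × ℝ => g q.1 q.2 :=
    ((hb₂.continuous_fderiv one_ne_zero).comp hpc).clm_apply continuous_const
  have hfc : Continuous fun q : ℝ × ℝ => fderiv ℝ b₁ (p q.1 q.2) e₃ :=
    ((hb₁.continuous_fderiv one_ne_zero).comp hpc).clm_apply continuous_const
  -- Claim A : ∀ t, ∫ s in 0..1, g s t = 0
  have claimA : ∀ t : ℝ, ∫ s in (0:ℝ)..1, g s t = 0 := by
    intro t
    have hderiv : ∀ s ∈ Set.uIcc (0:ℝ) 1, HasDerivAt (fun s => b₂ (p s t)) (g s t) s := by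
      intro s _
      exact ((hb₂.differentiable one_ne_zero _).hasFDerivAt).comp_hasDerivAt s (hcurve₂ t s)
    have hint : IntervalIntegrable (fun s => g s t) volume 0 1 :=
      (hgc.comp (continuous_id.prodMk continuous_const)).intervalIntegrable 0 1
    rw [intervalIntegral.integral_eq_sub_of_hasDerivAt hderiv hint]
    have : p 0 t + Pi.single 2 1 = p 1 t := by
      simp [hpdef, he₂]; module
    rw [← this, hp₂]
    ring
  -- Claim B : ∀ s, ∫ t in 0..1, g s t = c
  have claimB : ∀ s : ℝ, ∫ t in (0:ℝ)..1, g s t = c := by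
    intro s
    have hderiv : ∀ t ∈ Set.uIcc (0:ℝ) 1,
        HasDerivAt (fun t => b₁ (p s t) + c * t) (g s t) t := by
      intro t _
      have h1 : HasDerivAt (fun t => b₁ (p s t)) (fderiv ℝ b₁ (p s t) e₃) t :=
        ((hb₁.differentiable one_ne_zero _).hasFDerivAt).comp_hasDerivAt t (hcurve₃ s t)
      have h2 : HasDerivAt (fun t : ℝ => c * t) c t := by
        simpa using (hasDerivAt_id t).const_mul c
      have := h1.add h2
      have he : fderiv ℝ b₁ (p s t) e₃ + c = g s t := by
        have := heq' s t; rw [hg]; linarith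
      rwa [he] at this
    have hint : IntervalIntegrable (fun t => g s t) volume 0 1 :=
      (hgc.comp (continuous_const.prodMk continuous_id)).intervalIntegrable 0 1
    rw [intervalIntegral.integral_eq_sub_of_hasDerivAt hderiv hint]
    have : p s 0 + Pi.single 3 1 = p s 1 := by
      simp [hpdef, he₃]
    rw [← this, hp₁]
    ring
  -- Fubini
  have hswap : ∫ s in (0:ℝ)..1, ∫ t in (0:ℝ)..1, g s t = ∫ t in (0:ℝ)..1, ∫ s in (0:ℝ)..1, g s t := by
    rw [intervalIntegral.integral_of_le (by norm_num : (0:ℝ) ≤ 1),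
        intervalIntegral.integral_of_le (by norm_num : (0:ℝ) ≤ 1)]
    simp_rw [intervalIntegral.integral_of_le (by norm_num : (0:ℝ) ≤ 1)]
    apply MeasureTheory.integral_integral_swap
    rw [Measure.prod_restrict]
    apply (hgc.continuousOn.integrableOn_compact (isCompact_Icc.prod isCompact_Icc)).mono_set
    exact Set.prod_mono Set.Ioc_subset_Icc_self Set.Ioc_subset_Icc_self
  have h1 : ∫ s in (0:ℝ)..1, ∫ t in (0:ℝ)..1, g s t = c := by
    simp_rw [claimB]; simp
  have h2 : ∫ t in (0:ℝ)..1, ∫ s in (0:ℝ)..1, g s t = 0 := by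
    simp_rw [claimA]; simp
  rw [h1, h2, hc] at hswap
  nlinarith [Real.pi_pos]
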